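/- arXiv:1204.2674 — 3 statements merged into one kernel-verified Lean document; each statement's English description precedes it below -/
import Mathlib

section
/- In the free unital associative ℚ-algebra ℚ⟨X⟩, for all elements a₁,...,a₆, the element [a₁,a₂][a₃,a₄][a₅,a₆] + [a₁,a₃][a₂,a₄][a₅,a₆] lies in the ideal T⁽³,²⁾_ℚ generated by all [b₁,b₂,b₃][b₄,b₅] and [b₁,b₂,b₃,b₄]. -/
noncomputable section

/-- `ℚ⟨X⟩`, the free unital associative `ℚ`-algebra on a countable set `X`. -/
abbrev RQ : Type := FreeAlgebra ℚ ℕ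

/-- The commutator `[a,b] = ab - ba`. -/
def br (a b : RQ) : RQ := a * b - b * a

/-- `T⁽³,²⁾_ℚ`: the two-sided ideal generated by all `[b₁,b₂,b₃][b₄,b₅]` and `[b₁,b₂,b₃,b₄]`. -/
def T32Q : TwoSidedIdeal RQ := TwoSidedIdeal.span
  ({y | ∃ a b c d e : RQ, y = br (br a b) c * br d e} ∪
   {y | ∃ a b c d : RQ, y = br (br (br a b) c) d})

lemma gen1_mem (a b c d e : RQ) : br (br a b) c * br d e ∈ T32Q :=
  TwoSidedIdeal.subset_span (Or.inl ⟨a, b, c, d, e, rfl⟩)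

lemma gen2_mem (a b c d : RQ) : br (br (br a b) c) d ∈ T32Q :=
  TwoSidedIdeal.subset_span (Or.inr ⟨a, b, c, d, rfl⟩)

lemma key (x y z e f u v : RQ) : u * br (br x y) z * (v * br e f) ∈ T32Q := by
  have h : u * br (br x y) z * (v * br e f)
      = u * v * (br (br x y) z * br e f) + u * (br (br (br x y) z) v * br e f) := by
    simp only [br]; noncomm_ring
  rw [h]
  exact T32Q.add_mem
    (T32Q.mul_mem_left _ _ (gen1_mem x y z e f))
    (T32Q.mul_mem_left _ _ (T32Q.mul_mem_right _ _ (gen2_mem x y z v)))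

theorem stmt14 (a₁ a₂ a₃ a₄ a₅ a₆ : RQ) :
    br a₁ a₂ * br a₃ a₄ * br a₅ a₆ + br a₁ a₃ * br a₂ a₄ * br a₅ a₆ ∈ T32Q := by
  have h : br a₁ a₂ * br a₃ a₄ * br a₅ a₆ + br a₁ a₃ * br a₂ a₄ * br a₅ a₆
      = 1 * br (br a₁ (a₂ * a₃)) a₄ * (1 * br a₅ a₆)
        - 1 * br (br a₁ a₂) a₄ * (a₃ * br a₅ a₆)
        - a₂ * br (br a₁ a₃) a₄ * (1 * br a₅ a₆)
        - 1 * br (br a₂ a₄) (br a₁ a₃) * (1 * br a₅ a₆) := by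
    simp only [br]; noncomm_ring
  rw [h]
  exact T32Q.sub_mem (T32Q.sub_mem (T32Q.sub_mem (key _ _ _ _ _ _ _) (key _ _ _ _ _ _ _))
    (key _ _ _ _ _ _ _)) (key _ _ _ _ _ _ _)
end
end

section
/- In ℚ⟨X⟩, for all k ≥ 3, all permutations σ ∈ S_{2k} and all elements a₁,...,a_{2k}, one has [a₁,a₂][a₃,a₄]···[a_{2k−1},a_{2k}] ≡ sgn(σ)·[a_{σ(1)},a_{σ(2)}]···[a_{σ(2k−1)},a_{σ(2k)}] modulo T⁽³,²⁾_ℚ. -/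
noncomputable section

/- ### Auxiliary development -/

section Aux

variable {A : Type*} [Ring A]

/-- the commutator in a general ring -/
def bk (x y : A) : A := x * y - y * x

theorem bk_swap (x y : A) : bk y x = - bk x y := by
  simp only [bk]; abel

/-- first index of the `s`-th bracket factor -/
theorem E0_lt {k : ℕ} (s : Fin k) : 2 * s.1 < 2 * k := by omega

def E0 {k : ℕ} (s : Fin k) : Fin (2 * k) := ⟨2 * s.1, E0_lt s⟩

/-- second index of the `s`-th bracket factor -/
theorem E1_lt {k : ℕ} (s : Fin k) : 2 * s.1 + 1 < 2 * k := by omega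

def E1 {k : ℕ} (s : Fin k) : Fin (2 * k) := ⟨2 * s.1 + 1, E1_lt s⟩

/-- the product of `k` brackets -/
def Gd (k : ℕ) (b : Fin (2 * k) → A) : A :=
  (List.ofFn fun i : Fin k => bk (b (E0 i)) (b (E1 i))).prod

/-- the submonoid generated by brackets -/
def Msub (A : Type*) [Ring A] : Submonoid A :=
  Submonoid.closure {x : A | ∃ u v : A, x = bk u v}

/-- the `s`-th bracket factor as an element of `Msub A` -/
def lM {k : ℕ} (c : Fin (2 * k) → A) (s : Fin k) : ↥(Msub A) :=
  ⟨bk (c (E0 s)) (c (E1 s)), Submonoid.subset_closure ⟨_, _, rfl⟩⟩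

theorem flipEq {X Y : A} (h : X = -Y) : Y = -X := by rw [h, neg_neg]

theorem glue {X Y Z P Q : A} (R : A) (h : X * Y * Z = -(P * Q * Z)) :
    X * (Y * (Z * R)) = -(P * (Q * (Z * R))) := by
  have h2 := congrArg (fun t => t * R) h
  simp only [mul_assoc, neg_mul] at h2
  exact h2

section Hyps

variable (h1 : ∀ x y z u v : A, bk (bk x y) z * bk u v = 0)
variable (h2 : ∀ x y z w : A, bk (bk (bk x y) z) w = 0)

include h2 in
theorem comm_bk (x y u v : A) : bk x y * bk u v = bk u v * bk x y := by
  have e : bk x y * bk u v - bk u v * bk x y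
      = bk (bk (bk x y) u) v - bk (bk (bk x y) v) u := by
    simp only [bk]; noncomm_ring
  have e2 : bk x y * bk u v - bk u v * bk x y = 0 := by
    rw [e, h2, h2, sub_zero]
  exact sub_eq_zero.mp e2

include h1 in
theorem key_bk (x y z v e f : A) : bk (bk x y) z * v * bk e f = 0 := by
  have e : bk (bk x y) z * v * bk e f
      = bk (bk x y) z * bk e f * v + bk (bk x y) z * bk v (bk e f) := by
    simp only [bk]; noncomm_ring
  rw [e, h1, h1, zero_mul, zero_add]

include h1 h2 in
theorem I4 (a b x y e f : A) :
    bk a b * bk x y * bk e f = -(bk a x * bk b y * bk e f) := by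
  have E : (bk a b * bk x y + bk b y * bk a x) * bk e f
      = bk (bk a (b * x)) y * bk e f - bk (bk a b) y * x * bk e f
        - b * (bk (bk a x) y * bk e f) := by
    simp only [bk]; noncomm_ring
  have hz : (bk a b * bk x y + bk b y * bk a x) * bk e f = 0 := by
    rw [E, h1, key_bk h1, h1, mul_zero, sub_zero, sub_zero]
  rw [add_mul, comm_bk h2 b y a x] at hz
  exact eq_neg_of_add_eq_zero_left hz

include h1 h2 in
theorem V2 (a b x y e f : A) :
    bk x b * bk a y * bk e f = -(bk a b * bk x y * bk e f) := by
  rw [I4 h1 h2 x b a y e f, I4 h1 h2 a b x y e f, bk_swap a x]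
  simp only [neg_mul, neg_neg]

include h1 h2 in
theorem V3 (a b x y e f : A) :
    bk y b * bk x a * bk e f = -(bk a b * bk x y * bk e f) := by
  rw [I4 h1 h2 y b x a e f, bk_swap x y, bk_swap a b]
  simp only [neg_mul, mul_neg, neg_neg]
  rw [comm_bk h2 x y a b]

include h1 h2 in
theorem V4 (a b x y e f : A) :
    bk a y * bk x b * bk e f = -(bk a b * bk x y * bk e f) := by
  rw [I4 h1 h2 a y x b e f, I4 h1 h2 a b x y e f, bk_swap b y]
  simp only [neg_mul, mul_neg, neg_neg]

include h1 h2 in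
theorem swap_lem (k : ℕ) (hk : 3 ≤ k) (b : Fin (2 * k) → A) (i j : Fin (2 * k))
    (hij : i ≠ j) :
    Gd k (fun t => b (Equiv.swap i j t)) = - Gd k b := by
  classical
  have Mcomm : ∀ x ∈ Msub A, ∀ y ∈ Msub A, Commute x y := by
    intro x hx
    induction hx using Submonoid.closure_induction with
    | mem a ha =>
      intro y hy
      induction hy using Submonoid.closure_induction with
      | mem c hc =>
        obtain ⟨u, v, rfl⟩ := ha
        obtain ⟨p, q, rfl⟩ := hc
        exact comm_bk h2 u v p q
      | one => exact Commute.one_right _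
      | mul c d hc hd ihc ihd => exact Commute.mul_right ihc ihd
    | one => intro y hy; exact Commute.one_left y
    | mul c d hc hd ihc ihd => intro y hy; exact Commute.mul_left (ihc y hy) (ihd y hy)
  letI : CommMonoid ↥(Msub A) :=
    { (inferInstance : Monoid ↥(Msub A)) with
      mul_comm := fun x y => Subtype.ext (Mcomm x.1 x.2 y.1 y.2) }
  have Gcoe : ∀ c : Fin (2 * k) → A, Gd k c = ((∏ s : Fin k, lM c s : ↥(Msub A)) : A) := by
    intro c
    rw [show (∏ s : Fin k, lM c s) = (List.ofFn (lM c)).prod from (List.prod_ofFn).symm]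
    rw [show (((List.ofFn (lM c)).prod : ↥(Msub A)) : A)
        = (Msub A).subtype (List.ofFn (lM c)).prod from rfl,
      map_list_prod, List.map_ofFn]
    rfl
  have hv : i.1 ≠ j.1 := fun h => hij (Fin.ext h)
  by_cases hpq : i.1 / 2 = j.1 / 2
  · -- the two indices lie in the same bracket factor
    have main_same : ∀ (i' j' : Fin (2 * k)) (p : Fin k), i'.1 = 2 * p.1 → j'.1 = 2 * p.1 + 1 →
        Gd k (fun t => b (Equiv.swap i' j' t)) = - Gd k b := by
      intro i' j' p hi' hj'
      have hE0 : E0 p = i' := Fin.ext hi'.symm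
      have hE1 : E1 p = j' := Fin.ext hj'.symm
      have hrw : ∀ cf : Fin (2 * k) → A,
          Gd k cf = bk (cf (E0 p)) (cf (E1 p)) *
            ((∏ s ∈ Finset.univ.erase p, lM cf s : ↥(Msub A)) : A) := by
        intro cf
        rw [Gcoe cf, ← Finset.mul_prod_erase _ _ (Finset.mem_univ p)]
        rfl
      rw [hrw (fun t => b (Equiv.swap i' j' t)), hrw b]
      have hrest : (∏ s ∈ Finset.univ.erase p, lM (fun t => b (Equiv.swap i' j' t)) s)
          = (∏ s ∈ Finset.univ.erase p, lM b s) := by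
        refine Finset.prod_congr rfl fun s hs => ?_
        have hsp : s.1 ≠ p.1 := fun h => (Finset.mem_erase.mp hs).1 (Fin.ext h)
        refine Subtype.ext ?_
        show bk (b (Equiv.swap i' j' (E0 s))) (b (Equiv.swap i' j' (E1 s)))
            = bk (b (E0 s)) (b (E1 s))
        rw [Equiv.swap_apply_of_ne_of_ne (Fin.ne_of_val_ne (show 2 * s.1 ≠ i'.1 by omega))
            (Fin.ne_of_val_ne (show 2 * s.1 ≠ j'.1 by omega)),
          Equiv.swap_apply_of_ne_of_ne (Fin.ne_of_val_ne (show 2 * s.1 + 1 ≠ i'.1 by omega))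
            (Fin.ne_of_val_ne (show 2 * s.1 + 1 ≠ j'.1 by omega))]
      rw [hrest]
      show bk (b (Equiv.swap i' j' (E0 p))) (b (Equiv.swap i' j' (E1 p))) * _ = _
      rw [hE0, hE1, Equiv.swap_apply_left, Equiv.swap_apply_right, bk_swap, neg_mul]
    rcases (by omega : (i.1 = 2 * (i.1 / 2) ∧ j.1 = 2 * (i.1 / 2) + 1) ∨
        (j.1 = 2 * (i.1 / 2) ∧ i.1 = 2 * (i.1 / 2) + 1)) with h | h
    · exact main_same i j ⟨i.1 / 2, by omega⟩ h.1 h.2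
    · have := main_same j i ⟨i.1 / 2, by omega⟩ h.1 h.2
      rwa [Equiv.swap_comm j i] at this
  · -- the two indices lie in different bracket factors
    have hp2 : i.1 / 2 < k := by omega
    have hq2 : j.1 / 2 < k := by omega
    set p : Fin k := ⟨i.1 / 2, hp2⟩ with hpdef
    set q : Fin k := ⟨j.1 / 2, hq2⟩ with hqdef
    have hp : i.1 / 2 = p.1 := rfl
    have hq : j.1 / 2 = q.1 := rfl
    have hpqne : p ≠ q := fun h => hpq (congrArg Fin.val h)
    obtain ⟨r, hrp, hrq⟩ : ∃ r : Fin k, r ≠ p ∧ r ≠ q := by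
      by_contra hcon
      push_neg at hcon
      have hsub : (Finset.univ : Finset (Fin k)) ⊆ {p, q} := by
        intro s _
        rcases Classical.em (s = p) with h | h
        · simp [h]
        · simp [hcon s h]
      have hc1 := Finset.card_le_card hsub
      have hc2 : ({p, q} : Finset (Fin k)).card ≤ 2 :=
        (Finset.card_insert_le _ _).trans (by simp)
      rw [Finset.card_univ, Fintype.card_fin] at hc1
      omega
    have hqmem : q ∈ Finset.univ.erase p := Finset.mem_erase.mpr ⟨hpqne.symm, Finset.mem_univ q⟩
    have hrmem : r ∈ (Finset.univ.erase p).erase q :=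
      Finset.mem_erase.mpr ⟨hrq, Finset.mem_erase.mpr ⟨hrp, Finset.mem_univ r⟩⟩
    have hrw : ∀ cf : Fin (2 * k) → A,
        Gd k cf = bk (cf (E0 p)) (cf (E1 p)) * (bk (cf (E0 q)) (cf (E1 q)) *
          (bk (cf (E0 r)) (cf (E1 r)) *
            ((∏ s ∈ ((Finset.univ.erase p).erase q).erase r, lM cf s : ↥(Msub A)) : A))) := by
      intro cf
      rw [Gcoe cf, ← Finset.mul_prod_erase _ _ (Finset.mem_univ p),
        ← Finset.mul_prod_erase _ _ hqmem, ← Finset.mul_prod_erase _ _ hrmem]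
      rfl
    rw [hrw (fun t => b (Equiv.swap i j t)), hrw b]
    have hrest : (∏ s ∈ ((Finset.univ.erase p).erase q).erase r,
          lM (fun t => b (Equiv.swap i j t)) s)
        = (∏ s ∈ ((Finset.univ.erase p).erase q).erase r, lM b s) := by
      refine Finset.prod_congr rfl fun s hs => ?_
      have hs' := Finset.mem_erase.mp hs
      have hs'' := Finset.mem_erase.mp hs'.2
      have hsp : s.1 ≠ p.1 := fun h => (Finset.mem_erase.mp hs''.2).1 (Fin.ext h)
      have hsq : s.1 ≠ q.1 := fun h => hs''.1 (Fin.ext h)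
      refine Subtype.ext ?_
      show bk (b (Equiv.swap i j (E0 s))) (b (Equiv.swap i j (E1 s)))
          = bk (b (E0 s)) (b (E1 s))
      rw [Equiv.swap_apply_of_ne_of_ne (Fin.ne_of_val_ne (show 2 * s.1 ≠ i.1 by omega))
          (Fin.ne_of_val_ne (show 2 * s.1 ≠ j.1 by omega)),
        Equiv.swap_apply_of_ne_of_ne (Fin.ne_of_val_ne (show 2 * s.1 + 1 ≠ i.1 by omega))
          (Fin.ne_of_val_ne (show 2 * s.1 + 1 ≠ j.1 by omega))]
    rw [hrest]
    show bk (b (Equiv.swap i j (E0 p))) (b (Equiv.swap i j (E1 p))) *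
        (bk (b (Equiv.swap i j (E0 q))) (b (Equiv.swap i j (E1 q))) *
          (bk (b (Equiv.swap i j (E0 r))) (b (Equiv.swap i j (E1 r))) * _)) = _
    have hrE0 : Equiv.swap i j (E0 r) = E0 r :=
      Equiv.swap_apply_of_ne_of_ne
        (Fin.ne_of_val_ne (show 2 * r.1 ≠ i.1 by
          have : r.1 ≠ p.1 := fun h => hrp (Fin.ext h); omega))
        (Fin.ne_of_val_ne (show 2 * r.1 ≠ j.1 by
          have : r.1 ≠ q.1 := fun h => hrq (Fin.ext h); omega))
    have hrE1 : Equiv.swap i j (E1 r) = E1 r :=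
      Equiv.swap_apply_of_ne_of_ne
        (Fin.ne_of_val_ne (show 2 * r.1 + 1 ≠ i.1 by
          have : r.1 ≠ p.1 := fun h => hrp (Fin.ext h); omega))
        (Fin.ne_of_val_ne (show 2 * r.1 + 1 ≠ j.1 by
          have : r.1 ≠ q.1 := fun h => hrq (Fin.ext h); omega))
    rw [hrE0, hrE1]
    have hi2 : i.1 = 2 * p.1 ∨ i.1 = 2 * p.1 + 1 := by omega
    have hj2 : j.1 = 2 * q.1 ∨ j.1 = 2 * q.1 + 1 := by omega
    have hE0pi : i.1 = 2 * p.1 → E0 p = i := fun h => Fin.ext h.symm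
    have hE1pi : i.1 = 2 * p.1 + 1 → E1 p = i := fun h => Fin.ext h.symm
    have hE0qj : j.1 = 2 * q.1 → E0 q = j := fun h => Fin.ext h.symm
    have hE1qj : j.1 = 2 * q.1 + 1 → E1 q = j := fun h => Fin.ext h.symm
    rcases hi2 with hi2 | hi2 <;> rcases hj2 with hj2 | hj2
    · -- i = 2p, j = 2q
      rw [hE0pi hi2, hE0qj hj2, Equiv.swap_apply_left, Equiv.swap_apply_right,
        Equiv.swap_apply_of_ne_of_ne (Fin.ne_of_val_ne (show 2 * p.1 + 1 ≠ i.1 by omega))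
          (Fin.ne_of_val_ne (show 2 * p.1 + 1 ≠ j.1 by omega)),
        Equiv.swap_apply_of_ne_of_ne (Fin.ne_of_val_ne (show 2 * q.1 + 1 ≠ i.1 by omega))
          (Fin.ne_of_val_ne (show 2 * q.1 + 1 ≠ j.1 by omega))]
      exact glue _ (V2 h1 h2 (b i) (b (E1 p)) (b j) (b (E1 q)) (b (E0 r)) (b (E1 r)))
    · -- i = 2p, j = 2q + 1
      rw [hE0pi hi2, hE1qj hj2, Equiv.swap_apply_left, Equiv.swap_apply_right,
        Equiv.swap_apply_of_ne_of_ne (Fin.ne_of_val_ne (show 2 * p.1 + 1 ≠ i.1 by omega))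
          (Fin.ne_of_val_ne (show 2 * p.1 + 1 ≠ j.1 by omega)),
        Equiv.swap_apply_of_ne_of_ne (Fin.ne_of_val_ne (show 2 * q.1 ≠ i.1 by omega))
          (Fin.ne_of_val_ne (show 2 * q.1 ≠ j.1 by omega))]
      exact glue _ (V3 h1 h2 (b i) (b (E1 p)) (b (E0 q)) (b j) (b (E0 r)) (b (E1 r)))
    · -- i = 2p + 1, j = 2q
      rw [hE1pi hi2, hE0qj hj2, Equiv.swap_apply_left, Equiv.swap_apply_right,
        Equiv.swap_apply_of_ne_of_ne (Fin.ne_of_val_ne (show 2 * p.1 ≠ i.1 by omega))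
          (Fin.ne_of_val_ne (show 2 * p.1 ≠ j.1 by omega)),
        Equiv.swap_apply_of_ne_of_ne (Fin.ne_of_val_ne (show 2 * q.1 + 1 ≠ i.1 by omega))
          (Fin.ne_of_val_ne (show 2 * q.1 + 1 ≠ j.1 by omega))]
      exact glue _ (flipEq (I4 h1 h2 (b (E0 p)) (b i) (b j) (b (E1 q)) (b (E0 r)) (b (E1 r))))
    · -- i = 2p + 1, j = 2q + 1
      rw [hE1pi hi2, hE1qj hj2, Equiv.swap_apply_left, Equiv.swap_apply_right,
        Equiv.swap_apply_of_ne_of_ne (Fin.ne_of_val_ne (show 2 * p.1 ≠ i.1 by omega))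
          (Fin.ne_of_val_ne (show 2 * p.1 ≠ j.1 by omega)),
        Equiv.swap_apply_of_ne_of_ne (Fin.ne_of_val_ne (show 2 * q.1 ≠ i.1 by omega))
          (Fin.ne_of_val_ne (show 2 * q.1 ≠ j.1 by omega))]
      exact glue _ (V4 h1 h2 (b (E0 p)) (b i) (b (E0 q)) (b j) (b (E0 r)) (b (E1 r)))

include h1 h2 in
theorem G_perm (k : ℕ) (hk : 3 ≤ k) (b : Fin (2 * k) → A) (σ : Equiv.Perm (Fin (2 * k))) :
    Gd k b = (Equiv.Perm.sign σ : ℤ) • Gd k (fun i => b (σ i)) := by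
  have main : ∀ τ : Equiv.Perm (Fin (2 * k)), ∀ c : Fin (2 * k) → A,
      Gd k (fun t => c (τ t)) = (Equiv.Perm.sign τ : ℤ) • Gd k c := by
    intro τ
    refine Equiv.Perm.swap_induction_on τ ?_ ?_
    · intro c
      simp [Equiv.Perm.one_apply]
    · intro f x y hxy ih c
      have e1 : (fun t => c ((Equiv.swap x y * f) t))
          = fun t => (fun u => c (Equiv.swap x y u)) (f t) := rfl
      rw [e1, ih (fun u => c (Equiv.swap x y u)), swap_lem h1 h2 k hk c x y hxy,
        Equiv.Perm.sign_mul, Equiv.Perm.sign_swap hxy]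
      simp [Units.val_mul, smul_neg, neg_smul]
  have h := main σ b
  have hu : ((Equiv.Perm.sign σ : ℤˣ) : ℤ) * ((Equiv.Perm.sign σ : ℤˣ) : ℤ) = 1 := by
    rw [← Units.val_mul, Int.units_mul_self, Units.val_one]
  rw [h, smul_smul, hu, one_smul]

end Hyps

end Aux

theorem stmt15 (k : ℕ) (hk : 3 ≤ k) (σ : Equiv.Perm (Fin (2 * k))) (a : Fin (2 * k) → RQ) :
    (List.ofFn fun i : Fin k =>
        br (a ⟨2 * i.1, by omega⟩) (a ⟨2 * i.1 + 1, by omega⟩)).prod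
      - (Equiv.Perm.sign σ : ℤ) •
        (List.ofFn fun i : Fin k =>
            br (a (σ ⟨2 * i.1, by omega⟩)) (a (σ ⟨2 * i.1 + 1, by omega⟩))).prod
      ∈ T32Q := by
  classical
  have hbr : ∀ x y : RQ, T32Q.ringCon.mk' (br x y)
      = bk (T32Q.ringCon.mk' x) (T32Q.ringCon.mk' y) := by
    intro x y; simp only [br, bk, map_sub, map_mul]
  have hmk : ∀ g : RQ, g ∈ T32Q → T32Q.ringCon.mk' g = 0 := by
    intro g hg
    have h0 : T32Q.ringCon g 0 := (T32Q.mem_iff g).mp hg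
    calc T32Q.ringCon.mk' g = T32Q.ringCon.mk' 0 := (RingCon.eq _).mpr h0
      _ = 0 := map_zero _
  have hsur : Function.Surjective T32Q.ringCon.mk' := fun q => Quot.exists_rep q
  have h1 : ∀ x y z u v : T32Q.ringCon.Quotient, bk (bk x y) z * bk u v = 0 := by
    intro x y z u v
    obtain ⟨x, rfl⟩ := hsur x
    obtain ⟨y, rfl⟩ := hsur y
    obtain ⟨z, rfl⟩ := hsur z
    obtain ⟨u, rfl⟩ := hsur u
    obtain ⟨v, rfl⟩ := hsur v
    rw [← hbr, ← hbr, ← hbr, ← map_mul]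
    exact hmk _ (TwoSidedIdeal.subset_span (Or.inl ⟨x, y, z, u, v, rfl⟩))
  have h2 : ∀ x y z w : T32Q.ringCon.Quotient, bk (bk (bk x y) z) w = 0 := by
    intro x y z w
    obtain ⟨x, rfl⟩ := hsur x
    obtain ⟨y, rfl⟩ := hsur y
    obtain ⟨z, rfl⟩ := hsur z
    obtain ⟨w, rfl⟩ := hsur w
    rw [← hbr, ← hbr, ← hbr]
    exact hmk _ (TwoSidedIdeal.subset_span (Or.inr ⟨x, y, z, w, rfl⟩))
  refine (T32Q.rel_iff _ _).mp ?_
  refine (RingCon.eq _).mp ?_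
  show T32Q.ringCon.mk' _ = T32Q.ringCon.mk' _
  rw [map_zsmul, map_list_prod, map_list_prod, List.map_ofFn, List.map_ofFn]
  simp only [Function.comp_def, hbr]
  exact G_perm h1 h2 k hk (fun t => T32Q.ringCon.mk' (a t)) σ
end
end

section
/- In ℚ⟨X⟩, the element [x₁,x₃][x₂,x₃] does not lie in the ideal T⁽³,²⁾_ℚ, and the element [x₁,x₂]² does not lie in T⁽³,²⁾_ℚ. -/
noncomputable section

/-- The free generators. -/
def x (i : ℕ) : RQ := FreeAlgebra.ι ℚ i

def m (l : List ℕ) : RQ := (l.map (FreeAlgebra.ι ℚ)).prod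

lemma m_nil : m [] = 1 := rfl
lemma m_append (l1 l2 : List ℕ) : m (l1 ++ l2) = m l1 * m l2 := by
  simp [m, List.prod_append]

def g4 : ℕ → Fin 4 := fun n => if n = 1 then 1 else if n = 2 then 2 else if n = 3 then 3 else 0

def T4z (p q r s : Fin 4) : ℤ :=
  if (p = 1 ∧ q = 2 ∧ r = 2 ∧ s = 1) ∨ (p = 1 ∧ q = 3 ∧ r = 3 ∧ s = 2) ∨
     (p = 2 ∧ q = 3 ∧ r = 3 ∧ s = 1) then 1 else 0

def T4 (p q r s : Fin 4) : ℚ := (T4z p q r s : ℚ)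

def lam (w : List ℕ) : ℚ :=
  if w.length = 4 then T4 (g4 (w.getD 0 0)) (g4 (w.getD 1 0)) (g4 (w.getD 2 0)) (g4 (w.getD 3 0))
  else 0

lemma lam_ne4 {w : List ℕ} (h : w.length ≠ 4) : lam w = 0 := by rw [lam, if_neg h]

lemma lam_quad (a b c d : ℕ) : lam [a, b, c, d] = T4 (g4 a) (g4 b) (g4 c) (g4 d) := by
  simp [lam]

lemma quadT : ∀ p q r s : Fin 4,
    T4 p q r s - T4 q p r s - T4 r p q s + T4 r q p s
    - T4 s p q r + T4 s q p r + T4 s r p q - T4 s r q p = 0 := by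
  have h : ∀ p q r s : Fin 4,
      T4z p q r s - T4z q p r s - T4z r p q s + T4z r q p s
      - T4z s p q r + T4z s q p r + T4z s r p q - T4z s r q p = 0 := by decide
  intro p q r s
  have := h p q r s
  simp only [T4]
  exact_mod_cast congrArg (fun z : ℤ => (z : ℚ)) this

def F : RQ →ₗ[ℚ] ℚ :=
  (Finsupp.linearCombination ℚ (fun w : FreeMonoid ℕ => lam (FreeMonoid.toList w))) ∘ₗ
    (MonoidAlgebra.coeffLinearEquiv ℚ).toLinearMap ∘ₗ
    (FreeAlgebra.equivMonoidAlgebraFreeMonoid (R := ℚ) (X := ℕ)).toLinearMap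

lemma phi_m (l : List ℕ) :
    FreeAlgebra.equivMonoidAlgebraFreeMonoid (R := ℚ) (X := ℕ) (m l) =
      MonoidAlgebra.single (FreeMonoid.ofList l) 1 := by
  induction l with
  | nil =>
      simp only [m_nil, map_one, MonoidAlgebra.one_def]
      rfl
  | cons x t ih =>
      have hm : m (x :: t) = FreeAlgebra.ι ℚ x * m t := by simp [m]
      have hx : FreeAlgebra.equivMonoidAlgebraFreeMonoid (R := ℚ) (X := ℕ) (FreeAlgebra.ι ℚ x) =
          MonoidAlgebra.single (FreeMonoid.of x) 1 := by
        simp [FreeAlgebra.equivMonoidAlgebraFreeMonoid]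
      rw [hm, map_mul, ih, hx, MonoidAlgebra.single_mul_single, one_mul]
      rfl

lemma F_m (l : List ℕ) : F (m l) = lam l := by
  simp only [F, LinearMap.comp_apply, AlgEquiv.toLinearMap_apply]
  erw [phi_m]
  change Finsupp.linearCombination ℚ _ (Finsupp.single (FreeMonoid.ofList l) (1:ℚ)) = _
  erw [Finsupp.linearCombination_single, one_smul, FreeMonoid.toList_ofList]

lemma span_m : Submodule.span ℚ (Set.range m) = ⊤ := by
  rw [eq_top_iff]
  rintro a -
  set S := Submodule.span ℚ (Set.range m) with hS
  have hmem : ∀ l : List ℕ, m l ∈ S := fun l => Submodule.subset_span ⟨l, rfl⟩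
  have hmul : ∀ a ∈ S, ∀ b ∈ S, a * b ∈ S := by
    intro a ha
    refine Submodule.span_induction ?_ ?_ ?_ ?_ ha
    · rintro x ⟨l, rfl⟩ b hb
      refine Submodule.span_induction ?_ ?_ ?_ ?_ hb
      · rintro y ⟨l', rfl⟩
        rw [← m_append]; exact hmem _
      · simp [hmem]
      · intro u v _ _ hu hv; rw [mul_add]; exact add_mem hu hv
      · intro q u _ hu; rw [mul_smul_comm]; exact Submodule.smul_mem _ _ hu
    · intro b _; simp
    · intro u v _ _ hu hv b hb; rw [add_mul]; exact add_mem (hu b hb) (hv b hb)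
    · intro q u _ hu b hb; rw [smul_mul_assoc]; exact Submodule.smul_mem _ _ (hu b hb)
  induction a using FreeAlgebra.induction with
  | grade0 r =>
      have : (algebraMap ℚ RQ) r = r • m [] := by
        rw [m_nil, Algebra.algebraMap_eq_smul_one]
      rw [this]; exact Submodule.smul_mem _ _ (hmem [])
  | grade1 x =>
      have : FreeAlgebra.ι ℚ x = m [x] := by simp [m]
      rw [this]; exact hmem [x]
  | mul a b ha hb => exact hmul a ha b hb
  | add a b ha hb => exact add_mem ha hb

lemma reduceP (P : RQ → Prop) (h0 : P 0) (hadd : ∀ x y, P x → P y → P (x + y))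
    (hsmul : ∀ (q : ℚ) x, P x → P (q • x)) (hm : ∀ l, P (m l)) (a : RQ) : P a := by
  have ha : a ∈ Submodule.span ℚ (Set.range m) := by rw [span_m]; trivial
  refine Submodule.span_induction ?_ h0 (fun x y _ _ => hadd x y) (fun q x _ => hsmul q x) ha
  rintro _ ⟨l, rfl⟩; exact hm l

-- bracket linearity
lemma br_add_left (a b c : RQ) : br (a + b) c = br a c + br b c := by
  simp [br, add_mul, mul_add]; abel
lemma br_add_right (a b c : RQ) : br a (b + c) = br a b + br a c := by
  simp [br, add_mul, mul_add]; abel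
lemma br_smul_left (q : ℚ) (a c : RQ) : br (q • a) c = q • br a c := by
  simp [br, smul_sub, smul_mul_assoc, mul_smul_comm]
lemma br_smul_right (q : ℚ) (a c : RQ) : br a (q • c) = q • br a c := by
  simp [br, smul_sub, smul_mul_assoc, mul_smul_comm]
lemma br_zero_left (c : RQ) : br 0 c = 0 := by simp [br]
lemma br_zero_right (c : RQ) : br c 0 = 0 := by simp [br]
lemma br_one_left (c : RQ) : br 1 c = 0 := by simp [br]
lemma br_one_right (c : RQ) : br c 1 = 0 := by simp [br]

-- the auxiliary two-sided ideal
def I : TwoSidedIdeal RQ := TwoSidedIdeal.mk'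
  {a | ∀ u v : RQ, F (u * a * v) = 0}
  (by intro u v; simp)
  (by intro a b ha hb u v
      have : u * (a + b) * v = u * a * v + u * b * v := by noncomm_ring
      rw [this, map_add, ha, hb, add_zero])
  (by intro a ha u v
      have : u * (-a) * v = -(u * a * v) := by noncomm_ring
      rw [this, map_neg, ha, neg_zero])
  (by intro a b hb u v
      have : u * (a * b) * v = (u * a) * b * v := by noncomm_ring
      rw [this]; exact hb _ _)
  (by intro a b ha u v
      have : u * (a * b) * v = u * a * (b * v) := by noncomm_ring
      rw [this]; exact ha _ _)

lemma mem_I {a : RQ} : a ∈ I ↔ ∀ u v : RQ, F (u * a * v) = 0 := by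
  rw [I, TwoSidedIdeal.mem_mk']; rfl

lemma I_smul {a : RQ} (q : ℚ) (ha : a ∈ I) : q • a ∈ I := by
  rw [Algebra.smul_def]
  exact I.mul_mem_left _ _ ha

lemma F_sandwich (w : List ℕ) (h : 5 ≤ w.length) : ∀ u v : RQ, F (u * m w * v) = 0 := by
  refine reduceP (fun u => ∀ v : RQ, F (u * m w * v) = 0) ?_ ?_ ?_ ?_
  · intro v; simp
  · intro a b ha hb v
    have : (a + b) * m w * v = a * m w * v + b * m w * v := by noncomm_ring
    rw [this, map_add, ha, hb, add_zero]
  · intro q a ha v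
    have : (q • a) * m w * v = q • (a * m w * v) := by
      rw [smul_mul_assoc, smul_mul_assoc]
    rw [this, map_smul, ha, smul_zero]
  · intro l
    refine reduceP (fun v => F (m l * m w * v) = 0) ?_ ?_ ?_ ?_
    · simp
    · intro a b ha hb
      have : m l * m w * (a + b) = m l * m w * a + m l * m w * b := by noncomm_ring
      rw [this, map_add, ha, hb, add_zero]
    · intro q a ha
      rw [mul_smul_comm, map_smul, ha, smul_zero]
    · intro l'
      rw [← m_append, ← m_append, F_m]
      exact lam_ne4 (by simp; omega)

lemma expand4 (a b c d : List ℕ) :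
    br (br (br (m a) (m b)) (m c)) (m d) =
      m (a ++ (b ++ (c ++ d))) - m (b ++ (a ++ (c ++ d)))
      - m (c ++ (a ++ (b ++ d))) + m (c ++ (b ++ (a ++ d)))
      - m (d ++ (a ++ (b ++ c))) + m (d ++ (b ++ (a ++ c)))
      + m (d ++ (c ++ (a ++ b))) - m (d ++ (c ++ (b ++ a))) := by
  simp only [br, m_append, sub_mul, mul_sub]
  noncomm_ring

lemma expand32 (a b c d e : List ℕ) :
    br (br (m a) (m b)) (m c) * br (m d) (m e) =
      m (a ++ (b ++ (c ++ (d ++ e)))) - m (a ++ (b ++ (c ++ (e ++ d))))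
      - m (b ++ (a ++ (c ++ (d ++ e)))) + m (b ++ (a ++ (c ++ (e ++ d))))
      - m (c ++ (a ++ (b ++ (d ++ e)))) + m (c ++ (a ++ (b ++ (e ++ d))))
      + m (c ++ (b ++ (a ++ (d ++ e)))) - m (c ++ (b ++ (a ++ (e ++ d)))) := by
  simp only [br, m_append, sub_mul, mul_sub]
  noncomm_ring

lemma base32 (la lb lc ld le : List ℕ) :
    br (br (m la) (m lb)) (m lc) * br (m ld) (m le) ∈ I := by
  rcases la with _ | ⟨i, ta⟩
  · rw [m_nil, br_one_left, br_zero_left, zero_mul]; exact I.zero_mem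
  rcases lb with _ | ⟨j, tb⟩
  · rw [m_nil, br_one_right, br_zero_left, zero_mul]; exact I.zero_mem
  rcases lc with _ | ⟨k, tc⟩
  · rw [m_nil, br_one_right, zero_mul]; exact I.zero_mem
  rcases ld with _ | ⟨p, td⟩
  · rw [m_nil, br_one_left, mul_zero]; exact I.zero_mem
  rcases le with _ | ⟨q, te⟩
  · rw [m_nil, br_one_right, mul_zero]; exact I.zero_mem
  rw [mem_I]
  intro u v
  rw [expand32]
  simp only [mul_sub, sub_mul, mul_add, add_mul, map_sub, map_add]
  rw [F_sandwich _ (by simp; omega) u v, F_sandwich _ (by simp; omega) u v,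
    F_sandwich _ (by simp; omega) u v, F_sandwich _ (by simp; omega) u v,
    F_sandwich _ (by simp; omega) u v, F_sandwich _ (by simp; omega) u v,
    F_sandwich _ (by simp; omega) u v, F_sandwich _ (by simp; omega) u v]
  norm_num

lemma mem32 (a b c d e : RQ) : br (br a b) c * br d e ∈ I := by
  refine reduceP (fun a => ∀ b c d e, br (br a b) c * br d e ∈ I) ?_ ?_ ?_ ?_ a b c d e
  · intro b c d e; rw [br_zero_left, br_zero_left, zero_mul]; exact I.zero_mem
  · intro x y hx hy b c d e
    rw [br_add_left, br_add_left, add_mul]; exact I.add_mem (hx b c d e) (hy b c d e)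
  · intro q x hx b c d e
    rw [br_smul_left, br_smul_left, smul_mul_assoc]; exact I_smul q (hx b c d e)
  intro la b c d e
  refine reduceP (fun b => ∀ c d e, br (br (m la) b) c * br d e ∈ I) ?_ ?_ ?_ ?_ b c d e
  · intro c d e; rw [br_zero_right, br_zero_left, zero_mul]; exact I.zero_mem
  · intro x y hx hy c d e
    rw [br_add_right, br_add_left, add_mul]; exact I.add_mem (hx c d e) (hy c d e)
  · intro q x hx c d e
    rw [br_smul_right, br_smul_left, smul_mul_assoc]; exact I_smul q (hx c d e)
  intro lb c d e
  refine reduceP (fun c => ∀ d e, br (br (m la) (m lb)) c * br d e ∈ I) ?_ ?_ ?_ ?_ c d e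
  · intro d e; rw [br_zero_right, zero_mul]; exact I.zero_mem
  · intro x y hx hy d e
    rw [br_add_right, add_mul]; exact I.add_mem (hx d e) (hy d e)
  · intro q x hx d e
    rw [br_smul_right, smul_mul_assoc]; exact I_smul q (hx d e)
  intro lc d e
  refine reduceP (fun d => ∀ e, br (br (m la) (m lb)) (m lc) * br d e ∈ I) ?_ ?_ ?_ ?_ d e
  · intro e; rw [br_zero_left, mul_zero]; exact I.zero_mem
  · intro x y hx hy e
    rw [br_add_left, mul_add]; exact I.add_mem (hx e) (hy e)
  · intro q x hx e
    rw [br_smul_left, mul_smul_comm]; exact I_smul q (hx e)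
  intro ld e
  refine reduceP (fun e => br (br (m la) (m lb)) (m lc) * br (m ld) e ∈ I) ?_ ?_ ?_ ?_ e
  · show br (br (m la) (m lb)) (m lc) * br (m ld) 0 ∈ I
    rw [br_zero_right, mul_zero]; exact I.zero_mem
  · intro x y hx hy
    show br (br (m la) (m lb)) (m lc) * br (m ld) (x + y) ∈ I
    rw [br_add_right, mul_add]; exact I.add_mem hx hy
  · intro q x hx
    show br (br (m la) (m lb)) (m lc) * br (m ld) (q • x) ∈ I
    rw [br_smul_right, mul_smul_comm]; exact I_smul q hx
  intro le
  exact base32 la lb lc ld le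
lemma base4 (la lb lc ld : List ℕ) : br (br (br (m la) (m lb)) (m lc)) (m ld) ∈ I := by
  rcases la with _ | ⟨i, ta⟩
  · rw [m_nil, br_one_left, br_zero_left, br_zero_left]; exact I.zero_mem
  rcases lb with _ | ⟨j, tb⟩
  · rw [m_nil, br_one_right, br_zero_left, br_zero_left]; exact I.zero_mem
  rcases lc with _ | ⟨k, tc⟩
  · rw [m_nil, br_one_right, br_zero_left]; exact I.zero_mem
  rcases ld with _ | ⟨l, td⟩
  · rw [m_nil, br_one_right]; exact I.zero_mem
  by_cases hn : ta.length + tb.length + tc.length + td.length = 0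
  · have hta : ta = [] := List.length_eq_zero_iff.mp (by omega)
    have htb : tb = [] := List.length_eq_zero_iff.mp (by omega)
    have htc : tc = [] := List.length_eq_zero_iff.mp (by omega)
    have htd : td = [] := List.length_eq_zero_iff.mp (by omega)
    subst hta htb htc htd
    rw [mem_I]
    intro u v
    refine reduceP (fun u => ∀ v : RQ,
      F (u * br (br (br (m [i]) (m [j])) (m [k])) (m [l]) * v) = 0) ?_ ?_ ?_ ?_ u v
    · intro v; simp
    · intro x y hx hy v
      have : (x + y) * br (br (br (m [i]) (m [j])) (m [k])) (m [l]) * v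
          = x * br (br (br (m [i]) (m [j])) (m [k])) (m [l]) * v
          + y * br (br (br (m [i]) (m [j])) (m [k])) (m [l]) * v := by noncomm_ring
      rw [this, map_add, hx, hy, add_zero]
    · intro q x hx v
      rw [smul_mul_assoc, smul_mul_assoc, map_smul, hx, smul_zero]
    intro u' v
    refine reduceP (fun v => F (m u' * br (br (br (m [i]) (m [j])) (m [k])) (m [l]) * v) = 0)
      ?_ ?_ ?_ ?_ v
    · show F (m u' * br (br (br (m [i]) (m [j])) (m [k])) (m [l]) * 0) = 0
      simp
    · intro x y hx hy
      show F (m u' * br (br (br (m [i]) (m [j])) (m [k])) (m [l]) * (x + y)) = 0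
      rw [mul_add, map_add, hx, hy, add_zero]
    · intro q x hx
      show F (m u' * br (br (br (m [i]) (m [j])) (m [k])) (m [l]) * (q • x)) = 0
      rw [mul_smul_comm, map_smul, hx, smul_zero]
    intro v'
    rw [expand4]
    simp only [mul_sub, sub_mul, mul_add, add_mul, map_sub, map_add, ← m_append, F_m,
      List.append_assoc, List.cons_append, List.singleton_append, List.nil_append]
    by_cases hu : u'.length + v'.length = 0
    · have hu' : u' = [] := List.length_eq_zero_iff.mp (by omega)
      have hv' : v' = [] := List.length_eq_zero_iff.mp (by omega)
      subst hu' hv'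
      simp only [List.nil_append, List.append_nil]
      simp only [lam_quad]
      exact quadT (g4 i) (g4 j) (g4 k) (g4 l)
    · have hz : ∀ a b c d : ℕ, lam (u' ++ a :: b :: c :: d :: v') = 0 := fun a b c d =>
        lam_ne4 (by simp; omega)
      simp only [hz]
      norm_num
  · rw [mem_I]
    intro u v
    rw [expand4]
    simp only [mul_sub, sub_mul, mul_add, add_mul, map_sub, map_add]
    rw [F_sandwich _ (by simp; omega) u v, F_sandwich _ (by simp; omega) u v,
      F_sandwich _ (by simp; omega) u v, F_sandwich _ (by simp; omega) u v,
      F_sandwich _ (by simp; omega) u v, F_sandwich _ (by simp; omega) u v,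
      F_sandwich _ (by simp; omega) u v, F_sandwich _ (by simp; omega) u v]
    norm_num

lemma mem4 (a b c d : RQ) : br (br (br a b) c) d ∈ I := by
  refine reduceP (fun a => ∀ b c d, br (br (br a b) c) d ∈ I) ?_ ?_ ?_ ?_ a b c d
  · intro b c d; rw [br_zero_left, br_zero_left, br_zero_left]; exact I.zero_mem
  · intro x y hx hy b c d
    rw [br_add_left, br_add_left, br_add_left]; exact I.add_mem (hx b c d) (hy b c d)
  · intro q x hx b c d
    rw [br_smul_left, br_smul_left, br_smul_left]; exact I_smul q (hx b c d)
  intro la b c d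
  refine reduceP (fun b => ∀ c d, br (br (br (m la) b) c) d ∈ I) ?_ ?_ ?_ ?_ b c d
  · intro c d; rw [br_zero_right, br_zero_left, br_zero_left]; exact I.zero_mem
  · intro x y hx hy c d
    rw [br_add_right, br_add_left, br_add_left]; exact I.add_mem (hx c d) (hy c d)
  · intro q x hx c d
    rw [br_smul_right, br_smul_left, br_smul_left]; exact I_smul q (hx c d)
  intro lb c d
  refine reduceP (fun c => ∀ d, br (br (br (m la) (m lb)) c) d ∈ I) ?_ ?_ ?_ ?_ c d
  · intro d; rw [br_zero_right, br_zero_left]; exact I.zero_mem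
  · intro x y hx hy d
    rw [br_add_right, br_add_left]; exact I.add_mem (hx d) (hy d)
  · intro q x hx d
    rw [br_smul_right, br_smul_left]; exact I_smul q (hx d)
  intro lc d
  refine reduceP (fun d => br (br (br (m la) (m lb)) (m lc)) d ∈ I) ?_ ?_ ?_ ?_ d
  · show br (br (br (m la) (m lb)) (m lc)) 0 ∈ I
    rw [br_zero_right]; exact I.zero_mem
  · intro x y hx hy
    show br (br (br (m la) (m lb)) (m lc)) (x + y) ∈ I
    rw [br_add_right]; exact I.add_mem hx hy
  · intro q x hx
    show br (br (br (m la) (m lb)) (m lc)) (q • x) ∈ I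
    rw [br_smul_right]; exact I_smul q hx
  intro ld
  exact base4 la lb lc ld

lemma T32Q_le_I : ∀ z ∈ T32Q, z ∈ I := by
  intro z hz
  rw [T32Q, TwoSidedIdeal.mem_span_iff] at hz
  refine hz I ?_
  rintro y (⟨a, b, c, d, e, rfl⟩ | ⟨a, b, c, d, rfl⟩)
  · exact mem32 a b c d e
  · exact mem4 a b c d

lemma x_m (i : ℕ) : x i = m [i] := by simp [x, m]

theorem stmt16 :
    br (x 1) (x 3) * br (x 2) (x 3) ∉ T32Q ∧ br (x 1) (x 2) * br (x 1) (x 2) ∉ T32Q := by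
  constructor
  · intro hmem
    have h := (mem_I.mp (T32Q_le_I _ hmem)) 1 1
    rw [one_mul, mul_one] at h
    rw [x_m, x_m, x_m] at h
    simp only [br, sub_mul, mul_sub, ← m_append, map_sub, map_add, F_m] at h
    norm_num [lam, T4, T4z, g4] at h
    split_ifs at h <;> simp_all
  · intro hmem
    have h := (mem_I.mp (T32Q_le_I _ hmem)) 1 1
    rw [one_mul, mul_one] at h
    rw [x_m, x_m] at h
    simp only [br, sub_mul, mul_sub, ← m_append, map_sub, map_add, F_m] at h
    norm_num [lam, T4, T4z, g4] at h
    split_ifs at h <;> simp_all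
end
end
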